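/- Let I = (m₁, …, m_r) be a monomial ideal in S = k[x₁,…,x_m] and let T be its Taylor resolution, with basis u_J for subsets J ⊆ {1,…,r} and multidegrees m_J = lcm{m_j : j ∈ J}. The multiplication u_I · u_J = sgn(I,J) (m_I m_J / m_{I∪J}) u_{I∪J} when I ∩ J = ∅, and 0 otherwise, makes T a differential graded algebra; in particular the Leibniz rule d(u_I · u_J) = d(u_I)·u_J + (-1)^{|I|} u_I · d(u_J) holds. -/

import Mathlib

attribute [local instance] Classical.propDecidable

noncomputable section TaylorMorse

/-- The polynomial ring `S = k[x₁,…,xₘ]`. -/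
abbrev PolyS (k : Type) [Field k] (m : ℕ) := MvPolynomial (Fin m) k

/-- The underlying module of the Taylor resolution of a monomial ideal with `r`
generators: the free `S`-module on the subsets of `{1,…,r}`. -/
abbrev TaylorCx (k : Type) [Field k] (m r : ℕ) := Finset (Fin r) →₀ MvPolynomial (Fin m) k

variable {k : Type} [Field k] {m r : ℕ}

/-- The multidegree `m_J = lcm {m_j : j ∈ J}` of a subset of generators; a monomial
generator is recorded by its exponent vector `gen j : Fin m → ℕ`. -/
def mdeg (gen : Fin r → Fin m → ℕ) (J : Finset (Fin r)) : Fin m → ℕ :=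
  fun x => J.sup fun j => gen j x

/-- The monomial of `S` with exponent vector `v`. -/
def genMon (v : Fin m → ℕ) : MvPolynomial (Fin m) k :=
  MvPolynomial.monomial (Finsupp.equivFunOnFinite.symm v) 1

/-- The Taylor differential on a basis element:
`d(u_J) = Σᵢ (-1)^{i+1} (m_J/m_{J∖i}) u_{J∖i}`. -/
def taylorDElt (gen : Fin r → Fin m → ℕ) (J : Finset (Fin r)) : TaylorCx k m r :=
  ∑ i ∈ J, Finsupp.single (J.erase i)
    (((-1 : MvPolynomial (Fin m) k) ^ (J.filter fun j => j < i).card) *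
      genMon fun x => mdeg gen J x - mdeg gen (J.erase i) x)

/-- The Taylor differential, extended `S`-linearly. -/
def taylorD (gen : Fin r → Fin m → ℕ) :
    TaylorCx k m r →ₗ[PolyS k m] TaylorCx k m r :=
  Finsupp.lsum (PolyS k m) fun J =>
    LinearMap.toSpanSingleton (PolyS k m) (TaylorCx k m r) (taylorDElt gen J)

/-- The sign `sgn(I,J)` of the shuffle permutation making `I ∪ J` increasing. -/
def taylorSign (I J : Finset (Fin r)) : ℤ :=
  (-1) ^ ((I ×ˢ J).filter fun p => p.2 < p.1).card

/-- The Taylor product on basis elements: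
`u_I · u_J = sgn(I,J) (m_I m_J / m_{I∪J}) u_{I∪J}` if `I ∩ J = ∅`, and `0` otherwise. -/
def taylorMulElt (gen : Fin r → Fin m → ℕ) (I J : Finset (Fin r)) : TaylorCx k m r :=
  if Disjoint I J then
    Finsupp.single (I ∪ J)
      (((taylorSign I J : ℤ) : MvPolynomial (Fin m) k) *
        genMon fun x => mdeg gen I x + mdeg gen J x - mdeg gen (I ∪ J) x)
  else 0

/-- The Taylor product, extended `S`-bilinearly. -/
def taylorMul (gen : Fin r → Fin m → ℕ) :
    TaylorCx k m r →ₗ[PolyS k m] TaylorCx k m r →ₗ[PolyS k m] TaylorCx k m r :=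
  Finsupp.lsum (PolyS k m) fun I =>
    LinearMap.toSpanSingleton (PolyS k m) (TaylorCx k m r →ₗ[PolyS k m] TaylorCx k m r)
      (Finsupp.lsum (PolyS k m) fun J =>
        LinearMap.toSpanSingleton (PolyS k m) (TaylorCx k m r) (taylorMulElt gen I J))

/-- An element of the Taylor complex lies in `(x₁,…,xₘ)·T` iff all its coefficients have
vanishing constant term. -/
def InMaxIdeal (t : TaylorCx k m r) : Prop :=
  ∀ J, MvPolynomial.coeff 0 (t J) = 0

/-- The monomial ideal `I = (m₁,…,m_r)` generated by the given exponent vectors. -/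
def monIdeal (k : Type) [Field k] {m r : ℕ} (gen : Fin r → Fin m → ℕ) :
    Ideal (PolyS k m) :=
  Ideal.span (Set.range fun j => (genMon (gen j) : PolyS k m))

/-- One step of the modified Morse graph `G_T^ℳ`: either an arrow of `G_T` (a facet
relation) not in the matching, or the reversal of a matched arrow. -/
def morseStep (E : Finset (Finset (Fin r) × Finset (Fin r)))
    (u v : Finset (Fin r)) : Prop :=
  ((∃ i ∈ u, v = u.erase i) ∧ (u, v) ∉ E) ∨ (v, u) ∈ E

/-- A Morse matching on the Taylor resolution of the monomial ideal with generators
`gen`: a partial matching of the edges of `G_T` whose matched differential components are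
isomorphisms (equivalently `m_u = m_v`), such that reversing the matched edges creates no
directed cycle. -/
structure MorseMatching (gen : Fin r → Fin m → ℕ) : Type where
  edges : Finset (Finset (Fin r) × Finset (Fin r))
  isEdge : ∀ e ∈ edges, ∃ i ∈ e.1, e.2 = e.1.erase i
  disjointEdges : ∀ e ∈ edges, ∀ e' ∈ edges, e ≠ e' →
    e.1 ≠ e'.1 ∧ e.1 ≠ e'.2 ∧ e.2 ≠ e'.1 ∧ e.2 ≠ e'.2
  invertible : ∀ e ∈ edges, mdeg gen e.1 = mdeg gen e.2
  acyclic : ∀ J, ¬ Relation.TransGen (morseStep edges) J J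

variable {gen : Fin r → Fin m → ℕ}

/-- A cell is `ℳ`-critical if it is not matched. -/
def IsCritical (M : MorseMatching gen) (J : Finset (Fin r)) : Prop :=
  ∀ e ∈ M.edges, J ≠ e.1 ∧ J ≠ e.2

/-- A Morse matching is maximal if no Morse matching properly contains it. -/
def IsMaximalMatching (M : MorseMatching gen) : Prop :=
  ∀ M' : MorseMatching gen, M.edges ⊆ M'.edges → M'.edges = M.edges

/-- The splitting homotopy associated to a Morse matching, characterized by its
properties: it is a splitting homotopy (`φ² = 0`, `φdφ = φ`), it vanishes on cells that
are not targets of matched arrows, and on the target of a matched arrow `u → v` it has an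
invertible (constant) component at `u`. -/
structure IsAdaptedHomotopy (M : MorseMatching gen)
    (φ : TaylorCx k m r →ₗ[PolyS k m] TaylorCx k m r) : Prop where
  sq : φ ∘ₗ φ = 0
  pdp : φ ∘ₗ taylorD gen ∘ₗ φ = φ
  vanish : ∀ J : Finset (Fin r), (∀ e ∈ M.edges, J ≠ e.2) → φ (Finsupp.single J 1) = 0
  matched : ∀ e ∈ M.edges, ∃ c : k, c ≠ 0 ∧
    (φ (Finsupp.single e.2 1)) e.1 = MvPolynomial.C c

/-- The projection `q` on the span of the critical cells. -/
def qproj (M : MorseMatching gen) :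
    TaylorCx k m r →ₗ[PolyS k m] TaylorCx k m r :=
  Finsupp.lsum (PolyS k m) fun J =>
    if IsCritical M J then
      LinearMap.toSpanSingleton (PolyS k m) (TaylorCx k m r) (Finsupp.single J 1)
    else 0

/-- The Morse differential `d̃ = q ∘ (d - dφd)` on the critical cells. -/
def tilded (M : MorseMatching gen)
    (φ : TaylorCx k m r →ₗ[PolyS k m] TaylorCx k m r) :
    TaylorCx k m r →ₗ[PolyS k m] TaylorCx k m r :=
  qproj M ∘ₗ (taylorD gen - taylorD gen ∘ₗ φ ∘ₗ taylorD gen)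

/-- The idempotent `p = 1 - dφ - φd`. -/
def pmap (gen : Fin r → Fin m → ℕ)
    (φ : TaylorCx k m r →ₗ[PolyS k m] TaylorCx k m r) :
    TaylorCx k m r →ₗ[PolyS k m] TaylorCx k m r :=
  LinearMap.id - taylorD gen ∘ₗ φ - φ ∘ₗ taylorD gen

/-- Auxiliary: apply `φ` except in arity one, where `φλ₁` is replaced by the identity
(the inclusion). -/
def phiOr (φ : TaylorCx k m r →ₗ[PolyS k m] TaylorCx k m r) (s : ℕ)
    (x : TaylorCx k m r) : TaylorCx k m r :=
  if s = 1 then x else φ x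

/-- Merkulov's auxiliary maps `λₙ` for the Taylor dga and the homotopy `φ`:
`λ₁ = id`, `λ₂` is the Taylor multiplication, and
`λₙ = Σ_{s+t=n, s,t ≥ 1} (-1)^{s+1} λ₂(φλ_s, φλ_t)` with the convention `φλ₁ = id`. -/
def lam (gen : Fin r → Fin m → ℕ)
    (φ : TaylorCx k m r →ₗ[PolyS k m] TaylorCx k m r) :
    (n : ℕ) → (Fin n → TaylorCx k m r) → TaylorCx k m r
  | 0, _ => 0
  | 1, v => v 0
  | (n+2), v =>
    ∑ s ∈ (Finset.Ico 1 (n+2)).attach,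
      ((-1 : ℤ) ^ ((s : ℕ) + 1)) •
        taylorMul gen
          (phiOr φ (s : ℕ) (lam gen φ (s : ℕ) fun i =>
            v ⟨i, by have hs := Finset.mem_Ico.mp s.2; have hi := i.isLt; omega⟩))
          (phiOr φ (n + 2 - (s : ℕ)) (lam gen φ (n + 2 - (s : ℕ)) fun i =>
            v ⟨(s : ℕ) + i, by have hs := Finset.mem_Ico.mp s.2; have hi := i.isLt; omega⟩))
  termination_by n => n
  decreasing_by
  · have := Finset.mem_Ico.mp s.2; omega
  · have := Finset.mem_Ico.mp s.2; omega

/-- The relation generating the equivalence whose classes are counted by `cl`. -/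
def clRel (gen : Fin r → Fin m → ℕ) (J : Finset (Fin r)) (a b : Fin r) : Prop :=
  a ∈ J ∧ b ∈ J ∧ ∃ x, gen a x ≠ 0 ∧ gen b x ≠ 0

/-- `cl u`: the number of equivalence classes of the generators occurring in `u` under
the transitive closure of the non-coprimality relation. -/
def cl (gen : Fin r → Fin m → ℕ) (J : Finset (Fin r)) : ℕ :=
  (J.image fun a => J.filter fun b => Relation.ReflTransGen (clRel gen J) a b).card

/-- The complex `T ⊗_S k` computing `Tor^S(S/I, k)`: the free `k`-module on the subsets
of the generators. -/
abbrev TorCx (k : Type) [Field k] (r : ℕ) := Finset (Fin r) →₀ k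

/-- The reduced Taylor differential on `T ⊗_S k` (only components with unit coefficient,
i.e. with `m_J = m_{J∖i}`, survive). -/
def dkElt (gen : Fin r → Fin m → ℕ) (J : Finset (Fin r)) : TorCx k r :=
  ∑ i ∈ J, if mdeg gen J = mdeg gen (J.erase i) then
    Finsupp.single (J.erase i) ((-1 : k) ^ (J.filter fun j => j < i).card)
  else 0

/-- The differential of `T ⊗_S k`. -/
def dk (gen : Fin r → Fin m → ℕ) : TorCx k r →ₗ[k] TorCx k r :=
  Finsupp.lsum k fun J => LinearMap.toSpanSingleton k (TorCx k r) (dkElt gen J)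

/-- The reduced Taylor product on `T ⊗_S k` (basis elements). -/
def mulkElt (gen : Fin r → Fin m → ℕ) (I J : Finset (Fin r)) : TorCx k r :=
  if Disjoint I J ∧ (∀ x, mdeg gen I x + mdeg gen J x = mdeg gen (I ∪ J) x) then
    Finsupp.single (I ∪ J) ((taylorSign I J : ℤ) : k)
  else 0

/-- The product of the dga `T ⊗_S k`. -/
def mulk (gen : Fin r → Fin m → ℕ) : TorCx k r →ₗ[k] TorCx k r →ₗ[k] TorCx k r :=
  Finsupp.lsum k fun I =>
    LinearMap.toSpanSingleton k (TorCx k r →ₗ[k] TorCx k r)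
      (Finsupp.lsum k fun J => LinearMap.toSpanSingleton k (TorCx k r) (mulkElt gen I J))

/-- A defining system for the length-`n` Massey product of the cycles `α 0, …, α (n-1)`
in the dga `T ⊗_S k`. -/
structure DefiningSystem (k : Type) [Field k] {m r : ℕ} (gen : Fin r → Fin m → ℕ)
    (n : ℕ) (α : Fin n → TorCx k r) : Type where
  a : ∀ i j : Fin (n+1), i < j → TorCx k r
  deg : Fin (n+1) → Fin (n+1) → ℕ
  homog : ∀ i j (h : i < j), ∀ J ∈ (a i j h).support, J.card = deg i j
  init : ∀ i : Fin n, a i.castSucc i.succ Fin.castSucc_lt_succ = α i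
  compat : ∀ i j (h : i < j),
    dk gen (a i j h) = ∑ c ∈ (Finset.Ioo i j).attach,
      ((-1 : k) ^ (deg i c + 1)) •
        mulk gen (a i c (Finset.mem_Ioo.mp c.2).1) (a c j (Finset.mem_Ioo.mp c.2).2)

/-- The value `Σ_{0<c<n} ā_{0c} a_{cn}` of the Massey product on a defining system. -/
def masseyValue {k : Type} [Field k] {m r : ℕ} {gen : Fin r → Fin m → ℕ}
    {n : ℕ} {α : Fin n → TorCx k r} (D : DefiningSystem k gen n α) : TorCx k r :=
  ∑ c ∈ (Finset.Ioo (0 : Fin (n+1)) (Fin.last n)).attach,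
    ((-1 : k) ^ (D.deg 0 c + 1)) •
      mulk gen (D.a 0 c (Finset.mem_Ioo.mp c.2).1)
        (D.a c (Fin.last n) (Finset.mem_Ioo.mp c.2).2)

/-- The length-`n` Massey product of `α` is trivial: if it is defined (a defining system
exists) then it contains zero (some defining system has boundary value). -/
def MasseyTrivial (k : Type) [Field k] {m r : ℕ} (gen : Fin r → Fin m → ℕ)
    (n : ℕ) (α : Fin n → TorCx k r) : Prop :=
  Nonempty (DefiningSystem k gen n α) →
    ∃ D : DefiningSystem k gen n α, ∃ z : TorCx k r, dk gen z = masseyValue D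

/-- `R = S/I` is Golod: all Massey products on `Tor^S(R,k)` (on homogeneous cycles of
positive homological degree) are trivial. -/
def IsGolod (k : Type) [Field k] {m r : ℕ} (gen : Fin r → Fin m → ℕ) : Prop :=
  ∀ n : ℕ, 2 ≤ n → ∀ α : Fin n → TorCx k r,
    (∀ i, dk gen (α i) = 0) → (∀ i, (α i) ∅ = 0) → MasseyTrivial k gen n α

/-- The product on `Tor^S(R,k)` is trivial: the product of any two positive-degree
cycles is a boundary. -/
def ProductTrivial (k : Type) [Field k] {m r : ℕ} (gen : Fin r → Fin m → ℕ) : Prop :=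
  ∀ a b : TorCx k r, dk gen a = 0 → dk gen b = 0 → a ∅ = 0 → b ∅ = 0 →
    ∃ z : TorCx k r, dk gen z = mulk gen a b

/-- `t` is supported on the simplicial complex `Δ`. -/
def SupportedOn (Δ : Set (Finset (Fin r))) (t : TaylorCx k m r) : Prop :=
  ∀ J, t J ≠ 0 → J ∈ Δ

/-- `F_Δ` (the subcomplex of the Taylor complex spanned by the faces of `Δ`) is a minimal
free resolution of `S/I`: `Δ` is a simplicial complex containing all vertices, the
subcomplex is exact in positive degrees, its cokernel in degree 0 is `S/I`, and its
differential is minimal. -/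
def IsSimplicialMinimalResolution (gen : Fin r → Fin m → ℕ)
    (Δ : Set (Finset (Fin r))) : Prop :=
  (∀ J ∈ Δ, ∀ K, K ⊆ J → K ∈ Δ) ∧
  (∅ ∈ Δ) ∧ (∀ j : Fin r, {j} ∈ Δ) ∧
  (∀ t : TaylorCx k m r, SupportedOn Δ t → taylorD gen t = 0 → t ∅ = 0 →
    ∃ s : TaylorCx k m r, SupportedOn Δ s ∧ taylorD gen s = t) ∧
  (∀ p : PolyS k m, p ∈ monIdeal k gen ↔
    ∃ s : TaylorCx k m r, SupportedOn Δ s ∧ taylorD gen s = Finsupp.single ∅ p) ∧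
  (∀ J ∈ Δ, InMaxIdeal (taylorD (k := k) gen (Finsupp.single J 1)))

/-- `R = S/I` is simplicially resolvable: its minimal free resolution is a simplicial
resolution in the sense of Bayer–Peeva–Sturmfels. -/
def SimpliciallyResolvable (k : Type) [Field k] {m r : ℕ}
    (gen : Fin r → Fin m → ℕ) : Prop :=
  ∃ Δ : Set (Finset (Fin r)), IsSimplicialMinimalResolution (k := k) gen Δ


section Helpers
variable {k : Type} [Field k] {m r : ℕ} (gen : Fin r → Fin m → ℕ)

lemma genMon_mul (u v : Fin m → ℕ) :
    (genMon u : PolyS k m) * genMon v = genMon (fun x => u x + v x) := by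
  have h : Finsupp.equivFunOnFinite.symm u + Finsupp.equivFunOnFinite.symm v
      = Finsupp.equivFunOnFinite.symm (fun x => u x + v x) := by
    ext x; simp
  simp only [genMon, MvPolynomial.monomial_mul, one_mul, h]

lemma genMon_zero : (genMon (fun _ => 0) : PolyS k m) = 1 := by
  have h : (Finsupp.equivFunOnFinite.symm (fun _ => (0:ℕ) : Fin m → ℕ)) = 0 := by
    ext x; simp
  simp [genMon, h]

lemma mul_single_single (I J : Finset (Fin r)) (p q : PolyS k m) :
    taylorMul gen (Finsupp.single I p) (Finsupp.single J q) = (p * q) • taylorMulElt gen I J := by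
  simp only [taylorMul, Finsupp.lsum_single, LinearMap.toSpanSingleton_apply,
    LinearMap.smul_apply, smul_smul]

lemma d_single (J : Finset (Fin r)) (p : PolyS k m) :
    taylorD gen (Finsupp.single J p) = p • taylorDElt gen J := by
  simp only [taylorD, Finsupp.lsum_single, LinearMap.toSpanSingleton_apply]

lemma mdeg_union (I J : Finset (Fin r)) (x : Fin m) :
    mdeg gen (I ∪ J) x = max (mdeg gen I x) (mdeg gen J x) := by
  simp [mdeg, Finset.sup_union]

lemma mdeg_erase {I : Finset (Fin r)} {i : Fin r} (hi : i ∈ I) (x : Fin m) :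
    mdeg gen I x = max (gen i x) (mdeg gen (I.erase i) x) := by
  conv_lhs => rw [show I = insert i (I.erase i) from (Finset.insert_erase hi).symm]
  simp [mdeg, Finset.sup_insert]

lemma taylorSign_cast (I J : Finset (Fin r)) :
    ((taylorSign I J : ℤ) : PolyS k m)
      = (-1) ^ ((I ×ˢ J).filter fun p => p.2 < p.1).card := by
  simp [taylorSign]

lemma mulElt_of_disjoint {I J : Finset (Fin r)} (h : Disjoint I J) :
    taylorMulElt gen I J = Finsupp.single (I ∪ J)
      ((-1 : PolyS k m) ^ ((I ×ˢ J).filter fun p => p.2 < p.1).card *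
        genMon fun x => mdeg gen I x + mdeg gen J x - mdeg gen (I ∪ J) x) := by
  unfold taylorMulElt
  rw [if_pos h]
  congr 1
  simp [taylorSign]

lemma mulElt_of_not_disjoint {I J : Finset (Fin r)} (h : ¬ Disjoint I J) :
    (taylorMulElt gen I J : TaylorCx k m r) = 0 := by
  unfold taylorMulElt
  rw [if_neg h]

lemma card_filter_union {I J : Finset (Fin r)} (h : Disjoint I J) (p : Fin r → Prop) :
    ((I ∪ J).filter p).card = (I.filter p).card + (J.filter p).card := by
  rw [Finset.filter_union,
    Finset.card_union_of_disjoint (h.mono (Finset.filter_subset _ _) (Finset.filter_subset _ _))]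

lemma card_filter_lt_union {I J : Finset (Fin r)} (h : Disjoint I J) (i : Fin r) :
    ((I ∪ J).filter fun j => j < i).card
      = (I.filter fun j => j < i).card + (J.filter fun j => j < i).card := by
  rw [Finset.filter_union,
    Finset.card_union_of_disjoint (h.mono (Finset.filter_subset _ _) (Finset.filter_subset _ _))]

lemma card_inv_union_left {I J K : Finset (Fin r)} (h : Disjoint I J) :
    (((I ∪ J) ×ˢ K).filter fun p => p.2 < p.1).card
      = ((I ×ˢ K).filter fun p => p.2 < p.1).card
        + ((J ×ˢ K).filter fun p => p.2 < p.1).card := by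
  have hd : Disjoint (I ×ˢ K) (J ×ˢ K) := by
    rw [Finset.disjoint_left]
    intro p hp hp'
    exact (Finset.disjoint_left.mp h) (Finset.mem_product.mp hp).1 (Finset.mem_product.mp hp').1
  rw [Finset.union_product, Finset.filter_union,
    Finset.card_union_of_disjoint (hd.mono (Finset.filter_subset _ _) (Finset.filter_subset _ _))]

lemma card_inv_union_right {I J K : Finset (Fin r)} (h : Disjoint J K) :
    ((I ×ˢ (J ∪ K)).filter fun p => p.2 < p.1).card
      = ((I ×ˢ J).filter fun p => p.2 < p.1).card
        + ((I ×ˢ K).filter fun p => p.2 < p.1).card := by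
  have hd : Disjoint (I ×ˢ J) (I ×ˢ K) := by
    rw [Finset.disjoint_left]
    intro p hp hp'
    exact (Finset.disjoint_left.mp h) (Finset.mem_product.mp hp).2 (Finset.mem_product.mp hp').2
  rw [Finset.product_union, Finset.filter_union,
    Finset.card_union_of_disjoint (hd.mono (Finset.filter_subset _ _) (Finset.filter_subset _ _))]

lemma card_inv_singleton_left (i : Fin r) (J : Finset (Fin r)) :
    (({i} ×ˢ J).filter fun p => p.2 < p.1).card = (J.filter fun j => j < i).card := by
  apply Finset.card_bij (fun p _ => p.2)
  · intro p hp
    simp only [Finset.mem_filter, Finset.mem_product, Finset.mem_singleton] at hp ⊢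
    exact ⟨hp.1.2, hp.1.1 ▸ hp.2⟩
  · intro p hp q hq hpq
    simp only [Finset.mem_filter, Finset.mem_product, Finset.mem_singleton] at hp hq
    exact Prod.ext (hp.1.1.trans hq.1.1.symm) hpq
  · intro b hb
    simp only [Finset.mem_filter] at hb
    exact ⟨(i, b), by simp [Finset.mem_filter, Finset.mem_product, hb.1, hb.2], rfl⟩

lemma card_inv_singleton_right (j : Fin r) (I : Finset (Fin r)) :
    ((I ×ˢ {j}).filter fun p => p.2 < p.1).card = (I.filter fun a => j < a).card := by
  apply Finset.card_bij (fun p _ => p.1)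
  · intro p hp
    simp only [Finset.mem_filter, Finset.mem_product, Finset.mem_singleton] at hp ⊢
    exact ⟨hp.1.1, hp.1.2 ▸ hp.2⟩
  · intro p hp q hq hpq
    simp only [Finset.mem_filter, Finset.mem_product, Finset.mem_singleton] at hp hq
    exact Prod.ext hpq (hp.1.2.trans hq.1.2.symm)
  · intro b hb
    simp only [Finset.mem_filter] at hb
    exact ⟨(b, j), by simp [Finset.mem_filter, Finset.mem_product, hb.1, hb.2], rfl⟩

lemma card_inv_erase_left {I J : Finset (Fin r)} {i : Fin r} (hi : i ∈ I) :
    ((I ×ˢ J).filter fun p => p.2 < p.1).card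
      = (((I.erase i) ×ˢ J).filter fun p => p.2 < p.1).card
        + (J.filter fun j => j < i).card := by
  have h1 : I.erase i ∪ {i} = I := by
    rw [Finset.union_comm, ← Finset.insert_eq, Finset.insert_erase hi]
  have h2 := card_inv_union_left (J := {i}) (K := J)
    (by simp : Disjoint (I.erase i) ({i} : Finset (Fin r)))
  rw [h1] at h2
  rw [h2, card_inv_singleton_left]

lemma card_inv_erase_right {I J : Finset (Fin r)} {j : Fin r} (hj : j ∈ J) :
    ((I ×ˢ J).filter fun p => p.2 < p.1).card
      = ((I ×ˢ (J.erase j)).filter fun p => p.2 < p.1).card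
        + (I.filter fun a => j < a).card := by
  have h1 : J.erase j ∪ {j} = J := by
    rw [Finset.union_comm, ← Finset.insert_eq, Finset.insert_erase hj]
  have h2 := card_inv_union_right (I := I) (K := {j})
    (by simp : Disjoint (J.erase j) ({j} : Finset (Fin r)))
  rw [h1] at h2
  rw [h2, card_inv_singleton_right]

lemma card_filter_lt_erase (j : Fin r) (I : Finset (Fin r)) :
    (I.filter fun a => a < j).card + (I.filter fun a => j < a).card = (I.erase j).card := by
  have hd : Disjoint (I.filter fun a => a < j) (I.filter fun a => j < a) := by
    rw [Finset.disjoint_left]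
    intro a ha ha'
    exact absurd ((Finset.mem_filter.mp ha').2) (not_lt.mpr (le_of_lt (Finset.mem_filter.mp ha).2))
  rw [← Finset.card_union_of_disjoint hd]
  congr 1
  ext a
  simp only [Finset.mem_union, Finset.mem_filter, Finset.mem_erase]
  constructor
  · rintro (⟨h1, h2⟩ | ⟨h1, h2⟩)
    · exact ⟨ne_of_lt h2, h1⟩
    · exact ⟨ne_of_gt h2, h1⟩
  · rintro ⟨h1, h2⟩
    rcases lt_or_gt_of_ne h1 with h | h
    · exact Or.inl ⟨h2, h⟩
    · exact Or.inr ⟨h2, h⟩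

lemma negpow_mul_genMon_mul (a b : ℕ) (u v : Fin m → ℕ) :
    ((-1 : PolyS k m) ^ a * genMon u) * ((-1) ^ b * genMon v)
      = (-1) ^ (a + b) * genMon (fun x => u x + v x) := by
  rw [mul_mul_mul_comm, ← pow_add, genMon_mul]

lemma negpow_genMon_congr {a b : ℕ} {u v : Fin m → ℕ} (h : a % 2 = b % 2)
    (h2 : ∀ x, u x = v x) :
    ((-1 : PolyS k m) ^ a * genMon u) = (-1) ^ b * genMon v := by
  rw [funext h2, neg_one_pow_eq_pow_mod_two, h, ← neg_one_pow_eq_pow_mod_two]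

lemma negpow_genMon_cancel {a b : ℕ} {u v : Fin m → ℕ} (h : (a + b) % 2 = 1)
    (h2 : ∀ x, u x = v x) :
    ((-1 : PolyS k m) ^ a * genMon u) + (-1) ^ b * genMon v = 0 := by
  cases funext h2
  have hb : (-1 : PolyS k m) ^ b = -(-1) ^ a := by
    rw [neg_one_pow_eq_pow_mod_two, neg_one_pow_eq_pow_mod_two (n := a)]
    rcases Nat.mod_two_eq_zero_or_one a with h' | h' <;>
      rcases Nat.mod_two_eq_zero_or_one b with h'' | h'' <;>
      first
        | (exfalso; omega)
        | (rw [h', h'']; norm_num)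
  rw [hb]
  ring

lemma mulElt_empty_left (J : Finset (Fin r)) :
    (taylorMulElt gen ∅ J : TaylorCx k m r) = Finsupp.single J 1 := by
  rw [mulElt_of_disjoint gen (Finset.disjoint_empty_left J)]
  have h0 : (fun x => mdeg gen ∅ x + mdeg gen J x - mdeg gen (∅ ∪ J) x) = fun _ => (0:ℕ) := by
    funext x; simp [mdeg]
  rw [h0, genMon_zero]
  simp

lemma mulElt_empty_right (I : Finset (Fin r)) :
    (taylorMulElt gen I ∅ : TaylorCx k m r) = Finsupp.single I 1 := by
  rw [mulElt_of_disjoint gen (Finset.disjoint_empty_right I)]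
  have h0 : (fun x => mdeg gen I x + mdeg gen ∅ x - mdeg gen (I ∪ ∅) x) = fun _ => (0:ℕ) := by
    funext x; simp [mdeg]
  rw [h0, genMon_zero]
  simp

lemma taylorMul_one_left (a : TaylorCx k m r) :
    taylorMul gen (Finsupp.single ∅ 1) a = a := by
  induction a using Finsupp.induction_linear with
  | zero => exact map_zero _
  | add f g hf hg => rw [map_add, hf, hg]
  | single J p =>
      rw [mul_single_single, one_mul, mulElt_empty_left, Finsupp.smul_single, smul_eq_mul,
        mul_one]

lemma taylorMul_one_right (a : TaylorCx k m r) :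
    taylorMul gen a (Finsupp.single ∅ 1) = a := by
  induction a using Finsupp.induction_linear with
  | zero => rw [map_zero]; rfl
  | add f g hf hg => rw [map_add, LinearMap.add_apply, hf, hg]
  | single I p =>
      rw [mul_single_single, mul_one, mulElt_empty_right, Finsupp.smul_single, smul_eq_mul,
        mul_one]

set_option maxHeartbeats 1000000 in
lemma assoc_single (I J K : Finset (Fin r)) (p q s : PolyS k m) :
    taylorMul gen (taylorMul gen (Finsupp.single I p) (Finsupp.single J q)) (Finsupp.single K s)
      = taylorMul gen (Finsupp.single I p)
          (taylorMul gen (Finsupp.single J q) (Finsupp.single K s)) := by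
  rw [mul_single_single, mul_single_single gen J K, map_smul, LinearMap.smul_apply, map_smul]
  by_cases h1 : Disjoint I J
  · by_cases h2 : Disjoint J K
    · rw [mulElt_of_disjoint gen h1, mulElt_of_disjoint gen h2, mul_single_single,
        mul_single_single]
      by_cases h3 : Disjoint I K
      · have hL : Disjoint (I ∪ J) K := Finset.disjoint_union_left.mpr ⟨h3, h2⟩
        have hR : Disjoint I (J ∪ K) := Finset.disjoint_union_right.mpr ⟨h1, h3⟩
        rw [mulElt_of_disjoint gen hL, mulElt_of_disjoint gen hR, Finsupp.smul_single,
          Finsupp.smul_single, Finsupp.smul_single, Finsupp.smul_single]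
        have hset : I ∪ J ∪ K = I ∪ (J ∪ K) := Finset.union_assoc I J K
        rw [hset]
        congr 1
        simp only [smul_eq_mul]
        have key : ((-1 : PolyS k m) ^ ((I ×ˢ J).filter fun p => p.2 < p.1).card *
              genMon fun x => mdeg gen I x + mdeg gen J x - mdeg gen (I ∪ J) x) *
            ((-1) ^ (((I ∪ J) ×ˢ K).filter fun p => p.2 < p.1).card *
              genMon fun x => mdeg gen (I ∪ J) x + mdeg gen K x - mdeg gen (I ∪ (J ∪ K)) x)
            = ((-1) ^ ((J ×ˢ K).filter fun p => p.2 < p.1).card *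
              genMon fun x => mdeg gen J x + mdeg gen K x - mdeg gen (J ∪ K) x) *
            ((-1) ^ ((I ×ˢ (J ∪ K)).filter fun p => p.2 < p.1).card *
              genMon fun x => mdeg gen I x + mdeg gen (J ∪ K) x - mdeg gen (I ∪ (J ∪ K)) x) := by
          rw [negpow_mul_genMon_mul, negpow_mul_genMon_mul]
          apply negpow_genMon_congr
          · have e1 := card_inv_union_left (K := K) h1
            have e2 := card_inv_union_right (I := I) h2
            omega
          · intro x
            have m1 := mdeg_union gen I J x
            have m2 := mdeg_union gen J K x
            have m3 := mdeg_union gen I (J ∪ K) x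
            omega
        linear_combination (p * q * s) * key
      · have hL : ¬ Disjoint (I ∪ J) K := fun hc =>
          h3 (hc.mono_left Finset.subset_union_left)
        have hR : ¬ Disjoint I (J ∪ K) := fun hc =>
          h3 (hc.mono_right Finset.subset_union_right)
        rw [mulElt_of_not_disjoint gen hL, mulElt_of_not_disjoint gen hR, smul_zero, smul_zero,
          smul_zero, smul_zero]
    · have hL : ¬ Disjoint (I ∪ J) K := fun hc =>
        h2 (hc.mono_left Finset.subset_union_right)
      rw [mulElt_of_not_disjoint gen h2, mulElt_of_disjoint gen h1, mul_single_single,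
        mulElt_of_not_disjoint gen hL, smul_zero, smul_zero, map_zero, smul_zero]
  · have hR : ¬ Disjoint I (J ∪ K) := fun hc =>
      h1 (hc.mono_right Finset.subset_union_left)
    rw [mulElt_of_not_disjoint gen h1, map_zero, LinearMap.zero_apply, smul_zero]
    by_cases h2 : Disjoint J K
    · rw [mulElt_of_disjoint gen h2, mul_single_single, mulElt_of_not_disjoint gen hR,
        smul_zero, smul_zero]
    · rw [mulElt_of_not_disjoint gen h2]
      rw [show ((taylorMul gen) (Finsupp.single I p : TaylorCx k m r)) (0 : TaylorCx k m r)
          = 0 from map_zero _, smul_zero]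

lemma taylorMul_assoc (a b c : TaylorCx k m r) :
    taylorMul gen (taylorMul gen a b) c = taylorMul gen a (taylorMul gen b c) := by
  induction a using Finsupp.induction_linear with
  | zero => simp
  | add f g hf hg => simp only [map_add, LinearMap.add_apply, hf, hg]
  | single I p =>
    induction b using Finsupp.induction_linear with
    | zero => simp
    | add f g hf hg => simp only [map_add, LinearMap.add_apply, hf, hg]
    | single J q =>
      induction c using Finsupp.induction_linear with
      | zero => simp
      | add f g hf hg => simp only [map_add, hf, hg]
      | single K s => exact assoc_single gen I J K p q s

set_option maxHeartbeats 2000000 in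
lemma leibniz_single (I J : Finset (Fin r)) :
    taylorD (k := k) gen (taylorMul gen (Finsupp.single I 1) (Finsupp.single J 1)) =
      taylorMul gen (taylorD gen (Finsupp.single I 1)) (Finsupp.single J 1) +
      ((-1 : ℤ) ^ I.card) •
        taylorMul gen (Finsupp.single I 1) (taylorD gen (Finsupp.single J 1)) := by
  rw [mul_single_single, one_mul, one_smul, d_single, d_single, one_smul, one_smul]
  have hL : taylorMul gen (taylorDElt gen I) (Finsupp.single J 1)
      = ∑ i ∈ I, ((-1 : PolyS k m) ^ (I.filter fun j => j < i).card *
          genMon fun x => mdeg gen I x - mdeg gen (I.erase i) x) •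
            (taylorMulElt gen (I.erase i) J : TaylorCx k m r) := by
    unfold taylorDElt
    rw [map_sum, LinearMap.sum_apply]
    refine Finset.sum_congr rfl fun i hi => ?_
    rw [mul_single_single, mul_one]
  have hR : taylorMul gen (Finsupp.single I 1) (taylorDElt gen J)
      = ∑ j ∈ J, ((-1 : PolyS k m) ^ (J.filter fun i => i < j).card *
          genMon fun x => mdeg gen J x - mdeg gen (J.erase j) x) •
            (taylorMulElt gen I (J.erase j) : TaylorCx k m r) := by
    unfold taylorDElt
    rw [map_sum]
    refine Finset.sum_congr rfl fun j hj => ?_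
    rw [mul_single_single, one_mul]
  rw [hL, hR]
  by_cases h : Disjoint I J
  · rw [mulElt_of_disjoint gen h, d_single]
    unfold taylorDElt
    rw [Finset.smul_sum, Finset.smul_sum, Finset.sum_union h]
    congr 1
    · refine Finset.sum_congr rfl fun i hi => ?_
      have hiJ : i ∉ J := Finset.disjoint_left.mp h hi
      have hdisj : Disjoint (I.erase i) J := h.mono_left (Finset.erase_subset i I)
      have hset : (I ∪ J).erase i = I.erase i ∪ J := by
        rw [Finset.erase_union_distrib, Finset.erase_eq_of_notMem hiJ]
      rw [mulElt_of_disjoint gen hdisj, hset, Finsupp.smul_single, Finsupp.smul_single,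
        smul_eq_mul, smul_eq_mul]
      congr 1
      rw [negpow_mul_genMon_mul, negpow_mul_genMon_mul]
      apply negpow_genMon_congr
      · have e1 := card_inv_erase_left (J := J) hi
        have e2 := card_filter_lt_union h i
        omega
      · intro x
        have m1 := mdeg_union gen I J x
        have m2 := mdeg_union gen (I.erase i) J x
        have m3 := mdeg_erase gen hi x
        omega
    · refine Finset.sum_congr rfl fun j hj => ?_
      have hjI : j ∉ I := fun hc => (Finset.disjoint_left.mp h hc) hj
      have hdisj : Disjoint I (J.erase j) := h.mono_right (Finset.erase_subset j J)
      have hset : (I ∪ J).erase j = I ∪ J.erase j := by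
        rw [Finset.erase_union_distrib, Finset.erase_eq_of_notMem hjI]
      rw [mulElt_of_disjoint gen hdisj, hset, Finsupp.smul_single, Finsupp.smul_single,
        Finsupp.smul_single, smul_eq_mul, smul_eq_mul, zsmul_eq_mul]
      congr 1
      push_cast
      rw [negpow_mul_genMon_mul, negpow_mul_genMon_mul, ← mul_assoc, ← pow_add]
      apply negpow_genMon_congr
      · have e1 := card_inv_erase_right (I := I) hj
        have e2 := card_filter_lt_union h j
        have e3 := card_filter_lt_erase j I
        rw [Finset.erase_eq_of_notMem hjI] at e3
        omega
      · intro x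
        have m1 := mdeg_union gen I J x
        have m2 := mdeg_union gen I (J.erase j) x
        have m3 := mdeg_erase gen hj x
        omega
  · rw [mulElt_of_not_disjoint gen h]
    rw [show (taylorD (k := k) gen) (0 : TaylorCx k m r) = 0 from map_zero _]
    by_cases hone : ∃ i0 : Fin r, I ∩ J = {i0}
    · obtain ⟨i0, hi0⟩ := hone
      have hi0IJ : i0 ∈ I ∩ J := by rw [hi0]; exact Finset.mem_singleton_self i0
      have hi0I : i0 ∈ I := (Finset.mem_inter.mp hi0IJ).1
      have hi0J : i0 ∈ J := (Finset.mem_inter.mp hi0IJ).2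
      have hsum1 : (∑ i ∈ I, ((-1 : PolyS k m) ^ (I.filter fun j => j < i).card *
            genMon fun x => mdeg gen I x - mdeg gen (I.erase i) x) •
              (taylorMulElt gen (I.erase i) J : TaylorCx k m r))
          = ((-1 : PolyS k m) ^ (I.filter fun j => j < i0).card *
            genMon fun x => mdeg gen I x - mdeg gen (I.erase i0) x) •
              (taylorMulElt gen (I.erase i0) J : TaylorCx k m r) := by
        apply Finset.sum_eq_single_of_mem i0 hi0I
        intro i hiI hne
        have hnd : ¬ Disjoint (I.erase i) J := fun hd =>
          (Finset.disjoint_left.mp hd (Finset.mem_erase.mpr ⟨Ne.symm hne, hi0I⟩)) hi0J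
        rw [mulElt_of_not_disjoint gen hnd, smul_zero]
      have hsum2 : (∑ j ∈ J, ((-1 : PolyS k m) ^ (J.filter fun i => i < j).card *
            genMon fun x => mdeg gen J x - mdeg gen (J.erase j) x) •
              (taylorMulElt gen I (J.erase j) : TaylorCx k m r))
          = ((-1 : PolyS k m) ^ (J.filter fun i => i < i0).card *
            genMon fun x => mdeg gen J x - mdeg gen (J.erase i0) x) •
              (taylorMulElt gen I (J.erase i0) : TaylorCx k m r) := by
        apply Finset.sum_eq_single_of_mem i0 hi0J
        intro j hjJ hne
        have hnd : ¬ Disjoint I (J.erase j) := fun hd =>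
          (Finset.disjoint_left.mp hd hi0I) (Finset.mem_erase.mpr ⟨Ne.symm hne, hi0J⟩)
        rw [mulElt_of_not_disjoint gen hnd, smul_zero]
      rw [hsum1, hsum2]
      have hd1 : Disjoint (I.erase i0) J := by
        rw [Finset.disjoint_left]
        intro a ha haJ
        have : a ∈ I ∩ J := Finset.mem_inter.mpr ⟨Finset.mem_of_mem_erase ha, haJ⟩
        rw [hi0] at this
        exact (Finset.mem_erase.mp ha).1 (Finset.mem_singleton.mp this)
      have hd2 : Disjoint I (J.erase i0) := by
        rw [Finset.disjoint_left]
        intro a haI ha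
        have : a ∈ I ∩ J := Finset.mem_inter.mpr ⟨haI, Finset.mem_of_mem_erase ha⟩
        rw [hi0] at this
        exact (Finset.mem_erase.mp ha).1 (Finset.mem_singleton.mp this)
      rw [mulElt_of_disjoint gen hd1, mulElt_of_disjoint gen hd2]
      have hset1 : I.erase i0 ∪ J = I ∪ J := by
        ext a
        simp only [Finset.mem_union, Finset.mem_erase]
        constructor
        · rintro (⟨_, ha⟩ | ha)
          exacts [Or.inl ha, Or.inr ha]
        · rintro (ha | ha)
          · by_cases hax : a = i0
            · exact Or.inr (hax ▸ hi0J)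
            · exact Or.inl ⟨hax, ha⟩
          · exact Or.inr ha
      have hset2 : I ∪ J.erase i0 = I ∪ J := by
        ext a
        simp only [Finset.mem_union, Finset.mem_erase]
        constructor
        · rintro (ha | ⟨_, ha⟩)
          exacts [Or.inl ha, Or.inr ha]
        · rintro (ha | ha)
          · exact Or.inl ha
          · by_cases hax : a = i0
            · exact Or.inl (hax ▸ hi0I)
            · exact Or.inr ⟨hax, ha⟩
      rw [hset1, hset2, Finsupp.smul_single, smul_eq_mul, Finsupp.smul_single, smul_eq_mul,
        Finsupp.smul_single, zsmul_eq_mul, ← Finsupp.single_add]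
      refine (Finsupp.single_eq_zero.mpr ?_).symm
      push_cast
      rw [negpow_mul_genMon_mul, negpow_mul_genMon_mul, ← mul_assoc, ← pow_add]
      apply negpow_genMon_cancel
      · have e1 := card_inv_erase_left (J := J) hi0I
        have e2 := card_inv_erase_right (I := I) hi0J
        have e3 := card_filter_lt_erase i0 I
        have e4 := Finset.card_erase_of_mem hi0I
        have e5 := Finset.card_pos.mpr ⟨i0, hi0I⟩
        omega
      · intro x
        have m1 := mdeg_union gen I J x
        have m2 := mdeg_erase gen hi0I x
        have m3 := mdeg_erase gen hi0J x
        omega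
    · obtain ⟨x0, hx0I, hx0J⟩ := Finset.not_disjoint_iff.mp h
      have hx0 : x0 ∈ I ∩ J := Finset.mem_inter.mpr ⟨hx0I, hx0J⟩
      have hy : ∃ y ∈ I ∩ J, y ≠ x0 := by
        by_contra hc
        push_neg at hc
        exact hone ⟨x0, Finset.eq_singleton_iff_unique_mem.mpr ⟨hx0, fun a ha => hc a ha⟩⟩
      obtain ⟨y0, hy0, hyx⟩ := hy
      have hy0I : y0 ∈ I := (Finset.mem_inter.mp hy0).1
      have hy0J : y0 ∈ J := (Finset.mem_inter.mp hy0).2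
      have key1 : ∀ i : Fin r, ¬ Disjoint (I.erase i) J := by
        intro i hd
        by_cases hix : i = x0
        · exact (Finset.disjoint_left.mp hd
            (Finset.mem_erase.mpr ⟨fun hc => hyx (hc.trans hix), hy0I⟩)) hy0J
        · exact (Finset.disjoint_left.mp hd
            (Finset.mem_erase.mpr ⟨fun hc => hix hc.symm, hx0I⟩)) hx0J
      have key2 : ∀ j : Fin r, ¬ Disjoint I (J.erase j) := by
        intro j hd
        by_cases hjx : j = x0
        · exact (Finset.disjoint_left.mp hd hy0I)
            (Finset.mem_erase.mpr ⟨fun hc => hyx (hc.trans hjx), hy0J⟩)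
        · exact (Finset.disjoint_left.mp hd hx0I)
            (Finset.mem_erase.mpr ⟨fun hc => hjx hc.symm, hx0J⟩)
      rw [Finset.sum_eq_zero fun i _ => by
          rw [mulElt_of_not_disjoint gen (key1 i), smul_zero],
        Finset.sum_eq_zero fun j _ => by
          rw [mulElt_of_not_disjoint gen (key2 j), smul_zero],
        smul_zero, add_zero]

end Helpers

/- STATEMENT 4: The Taylor resolution with the product
`u_I · u_J = sgn(I,J)(m_I m_J / m_{I∪J}) u_{I∪J}` (for `I ∩ J = ∅`, and `0` otherwise)
is a differential graded algebra; in particular it is associative, unital, and the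
Leibniz rule `d(u_I u_J) = d(u_I) u_J + (-1)^{|I|} u_I d(u_J)` holds. -/
set_option maxHeartbeats 1000000 in
theorem taylor_resolution_is_dga
    (k : Type) [Field k] {m r : ℕ} (gen : Fin r → Fin m → ℕ) :
    -- associativity
    (∀ a b c : TaylorCx k m r,
      taylorMul gen (taylorMul gen a b) c = taylorMul gen a (taylorMul gen b c)) ∧
    -- `u_∅` is a unit
    (∀ a : TaylorCx k m r,
      taylorMul gen (Finsupp.single ∅ 1) a = a ∧ taylorMul gen a (Finsupp.single ∅ 1) = a) ∧
    -- Leibniz rule (on basis elements, hence everywhere by bilinearity)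
    (∀ I J : Finset (Fin r),
      taylorD (k := k) gen (taylorMul gen (Finsupp.single I 1) (Finsupp.single J 1)) =
        taylorMul gen (taylorD gen (Finsupp.single I 1)) (Finsupp.single J 1) +
        ((-1 : ℤ) ^ I.card) •
          taylorMul gen (Finsupp.single I 1) (taylorD gen (Finsupp.single J 1))) := by
  exact ⟨fun a b c => taylorMul_assoc gen a b c,
    fun a => ⟨taylorMul_one_left gen a, taylorMul_one_right gen a⟩,
    fun I J => leibniz_single gen I J⟩

end TaylorMorse
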